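/- Let G be a graph with a vertex-cut {u,v} where uv is not an edge, and let G₁, G₂ be induced subgraphs with V(G₁) ∪ V(G₂) = V(G) and V(G₁) ∩ V(G₂) = {u,v}. Then χ_f(G) ≤ max{χ_f(G₁), χ_f(G₂ + uv), χ_f(G₂ / uv)}, where G₂ + uv is G₂ with the edge uv added and G₂/uv is G₂ with u and v identified. -/

import Mathlib

/-- An `(a:b)`-coloring of `G`. -/
def HasFracColoring {V : Type*} (G : SimpleGraph V) (a b : ℕ) : Prop :=
  ∃ f : V → Finset (Fin a), (∀ v, (f v).card = b) ∧
    ∀ u v, G.Adj u v → Disjoint (f u) (f v)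

/-- The fractional chromatic number. -/
noncomputable def fracChrom {V : Type*} (G : SimpleGraph V) : ℝ :=
  sInf {x : ℝ | ∃ a b : ℕ, 0 < a ∧ 0 < b ∧ HasFracColoring G a b ∧ x = (a : ℝ) / b}

/-- `S` is a vertex-cut of `G` if deleting `S` leaves a disconnected graph. -/
def IsVertexCut {V : Type*} (G : SimpleGraph V) (S : Set V) : Prop :=
  ¬ (G.induce (Sᶜ : Set V)).Preconnected

/-- The graph obtained from `H` by identifying `u` and `v` (the merged vertex is
named `u`; the vertex `v` becomes isolated), deleting resulting loops. -/
def contractPair {α : Type*} [DecidableEq α] (H : SimpleGraph α) (u v : α) :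
    SimpleGraph α :=
  SimpleGraph.fromRel (fun x y => ∃ x' y', H.Adj x' y' ∧
    x = (if x' = v then u else x') ∧ y = (if y' = v then u else y'))

lemma hasFracColoring_of_type {V K : Type*} [Fintype K] (G : SimpleGraph V) (b : ℕ)
    (f : V → Finset K) (hcard : ∀ x, (f x).card = b)
    (hdisj : ∀ x y, G.Adj x y → Disjoint (f x) (f y)) :
    HasFracColoring G (Fintype.card K) b := by
  classical
  refine ⟨fun x => (f x).image (Fintype.equivFin K), fun x => ?_, fun x y h => ?_⟩
  · rw [Finset.card_image_of_injective _ (Fintype.equivFin K).injective, hcard]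
  · rw [Finset.disjoint_image (Fintype.equivFin K).injective]
    exact hdisj x y h

lemma fracSet_bddBelow {V : Type*} (G : SimpleGraph V) :
    BddBelow {x : ℝ | ∃ a b : ℕ, 0 < a ∧ 0 < b ∧ HasFracColoring G a b ∧ x = (a : ℝ) / b} := by
  refine ⟨0, fun x hx => ?_⟩
  obtain ⟨a, b, _, _, _, rfl⟩ := hx
  positivity

lemma fracChrom_le {V : Type*} (G : SimpleGraph V) {a b : ℕ} (ha : 0 < a) (hb : 0 < b)
    (h : HasFracColoring G a b) : fracChrom G ≤ (a : ℝ) / b :=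
  csInf_le (fracSet_bddBelow G) ⟨a, b, ha, hb, h, rfl⟩

lemma fracSet_nonempty {V : Type*} [Finite V] (G : SimpleGraph V) :
    ({x : ℝ | ∃ a b : ℕ, 0 < a ∧ 0 < b ∧ HasFracColoring G a b ∧ x = (a : ℝ) / b}).Nonempty := by
  classical
  have : Fintype V := Fintype.ofFinite V
  refine ⟨(Fintype.card V + 1 : ℕ) / 1, Fintype.card V + 1, 1, Nat.succ_pos _, one_pos, ?_, by push_cast; ring⟩
  refine ⟨fun x => {Fin.castLE (Nat.le_succ _) (Fintype.equivFin V x)}, fun x => rfl, fun x y h => ?_⟩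
  rw [Finset.disjoint_singleton]
  intro hxy
  exact h.ne ((Fintype.equivFin V).injective (Fin.castLE_injective _ hxy))

lemma exists_perm_image {α : Type*} [Fintype α] [DecidableEq α] (P Q P' Q' : Finset α)
    (hP : P'.card = P.card) (hQ : Q'.card = Q.card)
    (hPQ : (P' ∩ Q').card = (P ∩ Q).card) :
    ∃ π : Equiv.Perm α, P'.image π = P ∧ Q'.image π = Q := by
  classical
  have h2 : (P' \ Q').card = (P \ Q).card := by
    have a1 := Finset.card_inter_add_card_sdiff P' Q'
    have a2 := Finset.card_inter_add_card_sdiff P Q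
    omega
  have h3 : (Q' \ P').card = (Q \ P).card := by
    have a1 := Finset.card_inter_add_card_sdiff Q' P'
    have a2 := Finset.card_inter_add_card_sdiff Q P
    rw [Finset.inter_comm] at a1 a2
    omega
  have h4 : ((P' ∪ Q')ᶜ).card = ((P ∪ Q)ᶜ).card := by
    have a1 := Finset.card_union_add_card_inter P' Q'
    have a2 := Finset.card_union_add_card_inter P Q
    have b1 := Finset.card_compl (P' ∪ Q')
    have b2 := Finset.card_compl (P ∪ Q)
    have c1 := Finset.card_le_univ (P' ∪ Q')
    have c2 := Finset.card_le_univ (P ∪ Q)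
    omega
  set e₁ := Finset.equivOfCardEq hPQ
  set e₂ := Finset.equivOfCardEq h2
  set e₃ := Finset.equivOfCardEq h3
  set e₄ := Finset.equivOfCardEq h4
  have mem4 : ∀ x : α, x ∉ P' ∩ Q' → x ∉ P' \ Q' → x ∉ Q' \ P' → x ∈ (P' ∪ Q')ᶜ := by
    intro x a b c
    simp only [Finset.mem_inter, Finset.mem_sdiff, Finset.mem_compl, Finset.mem_union] at *
    tauto
  set g : α → α := fun x =>
    if h1 : x ∈ P' ∩ Q' then (e₁ ⟨x, h1⟩ : α)
    else if hh2 : x ∈ P' \ Q' then (e₂ ⟨x, hh2⟩ : α)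
    else if hh3 : x ∈ Q' \ P' then (e₃ ⟨x, hh3⟩ : α)
    else (e₄ ⟨x, mem4 x h1 hh2 hh3⟩ : α) with hg
  have n21 : ∀ {x : α}, x ∈ P' \ Q' → x ∉ P' ∩ Q' := by
    intro x h; simp only [Finset.mem_inter, Finset.mem_sdiff] at *; tauto
  have n31 : ∀ {x : α}, x ∈ Q' \ P' → x ∉ P' ∩ Q' := by
    intro x h; simp only [Finset.mem_inter, Finset.mem_sdiff] at *; tauto
  have n32 : ∀ {x : α}, x ∈ Q' \ P' → x ∉ P' \ Q' := by
    intro x h; simp only [Finset.mem_sdiff] at *; tauto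
  have n41 : ∀ {x : α}, x ∈ (P' ∪ Q')ᶜ → x ∉ P' ∩ Q' := by
    intro x h; simp only [Finset.mem_inter, Finset.mem_compl, Finset.mem_union] at *; tauto
  have n42 : ∀ {x : α}, x ∈ (P' ∪ Q')ᶜ → x ∉ P' \ Q' := by
    intro x h; simp only [Finset.mem_sdiff, Finset.mem_compl, Finset.mem_union] at *; tauto
  have n43 : ∀ {x : α}, x ∈ (P' ∪ Q')ᶜ → x ∉ Q' \ P' := by
    intro x h; simp only [Finset.mem_sdiff, Finset.mem_compl, Finset.mem_union] at *; tauto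
  have mem₁ : ∀ x (h : x ∈ P' ∩ Q'), g x ∈ P ∩ Q := by
    intro x h; rw [hg]; simp only; rw [dif_pos h]; exact (e₁ ⟨x, h⟩).2
  have mem₂ : ∀ x (h : x ∈ P' \ Q'), g x ∈ P \ Q := by
    intro x h; rw [hg]; simp only; rw [dif_neg (n21 h), dif_pos h]; exact (e₂ ⟨x, h⟩).2
  have mem₃ : ∀ x (h : x ∈ Q' \ P'), g x ∈ Q \ P := by
    intro x h; rw [hg]; simp only; rw [dif_neg (n31 h), dif_neg (n32 h), dif_pos h]
    exact (e₃ ⟨x, h⟩).2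
  have mem₄ : ∀ x (h : x ∈ (P' ∪ Q')ᶜ), g x ∈ (P ∪ Q)ᶜ := by
    intro x h; rw [hg]; simp only
    rw [dif_neg (n41 h), dif_neg (n42 h), dif_neg (n43 h)]
    exact (e₄ ⟨x, mem4 x (n41 h) (n42 h) (n43 h)⟩).2
  have inj₁ : ∀ x y (hx : x ∈ P' ∩ Q') (hy : y ∈ P' ∩ Q'), g x = g y → x = y := by
    intro x y hx hy h; rw [hg] at h; simp only at h; rw [dif_pos hx, dif_pos hy] at h
    exact congrArg Subtype.val (e₁.injective (Subtype.coe_injective h))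
  have inj₂ : ∀ x y (hx : x ∈ P' \ Q') (hy : y ∈ P' \ Q'), g x = g y → x = y := by
    intro x y hx hy h; rw [hg] at h; simp only at h
    rw [dif_neg (n21 hx), dif_pos hx, dif_neg (n21 hy), dif_pos hy] at h
    exact congrArg Subtype.val (e₂.injective (Subtype.coe_injective h))
  have inj₃ : ∀ x y (hx : x ∈ Q' \ P') (hy : y ∈ Q' \ P'), g x = g y → x = y := by
    intro x y hx hy h; rw [hg] at h; simp only at h
    rw [dif_neg (n31 hx), dif_neg (n32 hx), dif_pos hx,
        dif_neg (n31 hy), dif_neg (n32 hy), dif_pos hy] at h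
    exact congrArg Subtype.val (e₃.injective (Subtype.coe_injective h))
  have inj₄ : ∀ x y (hx : x ∈ (P' ∪ Q')ᶜ) (hy : y ∈ (P' ∪ Q')ᶜ), g x = g y → x = y := by
    intro x y hx hy h; rw [hg] at h; simp only at h
    rw [dif_neg (n41 hx), dif_neg (n42 hx), dif_neg (n43 hx),
        dif_neg (n41 hy), dif_neg (n42 hy), dif_neg (n43 hy)] at h
    exact congrArg Subtype.val (e₄.injective (Subtype.coe_injective h))
  have source_cases : ∀ x : α, x ∈ P' ∩ Q' ∨ x ∈ P' \ Q' ∨ x ∈ Q' \ P' ∨ x ∈ (P' ∪ Q')ᶜ := by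
    intro x
    simp only [Finset.mem_inter, Finset.mem_sdiff, Finset.mem_compl, Finset.mem_union]
    tauto
  have hginj : Function.Injective g := by
    intro x y hxy
    rcases source_cases x with hx | hx | hx | hx <;> rcases source_cases y with hy | hy | hy | hy
    all_goals first
      | exact inj₁ x y hx hy hxy
      | exact inj₂ x y hx hy hxy
      | exact inj₃ x y hx hy hxy
      | exact inj₄ x y hx hy hxy
      | (exfalso
         first | have gA := mem₁ x hx | have gA := mem₂ x hx | have gA := mem₃ x hx | have gA := mem₄ x hx
         first | have gB := mem₁ y hy | have gB := mem₂ y hy | have gB := mem₃ y hy | have gB := mem₄ y hy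
         rw [hxy] at gA
         simp only [Finset.mem_inter, Finset.mem_sdiff, Finset.mem_compl,
           Finset.mem_union] at gA gB
         tauto)
  have hgbij := (Finite.injective_iff_bijective).mp hginj
  refine ⟨Equiv.ofBijective g hgbij, ?_, ?_⟩
  · have hsub : P'.image g ⊆ P := by
      intro z hz
      obtain ⟨x, hx, rfl⟩ := Finset.mem_image.mp hz
      by_cases hq : x ∈ Q'
      · exact (Finset.mem_inter.mp (mem₁ x (Finset.mem_inter.mpr ⟨hx, hq⟩))).1
      · exact (Finset.mem_sdiff.mp (mem₂ x (Finset.mem_sdiff.mpr ⟨hx, hq⟩))).1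
    have : (P'.image g).card = P.card := by
      rw [Finset.card_image_of_injective _ hginj, hP]
    exact Finset.eq_of_subset_of_card_le hsub this.ge
  · have hsub : Q'.image g ⊆ Q := by
      intro z hz
      obtain ⟨x, hx, rfl⟩ := Finset.mem_image.mp hz
      by_cases hp : x ∈ P'
      · exact (Finset.mem_inter.mp (mem₁ x (Finset.mem_inter.mpr ⟨hp, hx⟩))).2
      · exact (Finset.mem_sdiff.mp (mem₃ x (Finset.mem_sdiff.mpr ⟨hx, hp⟩))).1
    have : (Q'.image g).card = Q.card := by
      rw [Finset.card_image_of_injective _ hginj, hQ]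
    exact Finset.eq_of_subset_of_card_le hsub this.ge

lemma prod_disjoint {α β : Type*} [DecidableEq α] [DecidableEq β]
    {t t' : Finset β} (h : Disjoint t t') (s s' : Finset α) :
    Disjoint (s ×ˢ t) (s' ×ˢ t') := by
  rw [Finset.disjoint_left]
  intro p hp hp'
  rw [Finset.mem_product] at hp hp'
  exact (Finset.disjoint_left.mp h) hp.2 hp'.2

lemma prod_inter {α β : Type*} [DecidableEq α] [DecidableEq β]
    (s s' : Finset α) (t t' : Finset β) :
    (s ×ˢ t) ∩ (s' ×ˢ t') = (s ∩ s') ×ˢ (t ∩ t') := by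
  ext ⟨p, q⟩; simp [Finset.mem_product]; tauto

lemma disjSum_disjoint {α β : Type*} {s s' : Finset α} {t t' : Finset β}
    (h1 : Disjoint s s') (h2 : Disjoint t t') :
    Disjoint (s.disjSum t) (s'.disjSum t') := by
  rw [Finset.disjoint_left]
  intro p hp hp'
  rw [Finset.mem_disjSum] at hp hp'
  rcases hp with ⟨a, ha, rfl⟩ | ⟨b, hb, rfl⟩
  · rcases hp' with ⟨a', ha', h⟩ | ⟨b', hb', h⟩
    · rw [Sum.inl.injEq] at h; subst h; exact (Finset.disjoint_left.mp h1) ha ha'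
    · simp at h
  · rcases hp' with ⟨a', ha', h⟩ | ⟨b', hb', h⟩
    · simp at h
    · rw [Sum.inr.injEq] at h; subst h; exact (Finset.disjoint_left.mp h2) hb hb'

lemma disjSum_inter {α β : Type*} [DecidableEq α] [DecidableEq β]
    (s s' : Finset α) (t t' : Finset β) :
    (s.disjSum t) ∩ (s'.disjSum t') = (s ∩ s').disjSum (t ∩ t') := by
  ext x
  cases x <;> simp [Finset.mem_disjSum]

lemma glue_coloring {V : Type*} [Fintype V] [DecidableEq V]
    (G : SimpleGraph V) (u v : V) (huv : u ≠ v)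
    (s₁ s₂ : Set V) (hunion : s₁ ∪ s₂ = Set.univ) (hinter : s₁ ∩ s₂ = {u, v})
    (hu₂ : u ∈ s₂) (hv₂ : v ∈ s₂)
    (hedges : ∀ x y, G.Adj x y → (x ∈ s₁ ∧ y ∈ s₁) ∨ (x ∈ s₂ ∧ y ∈ s₂))
    (hnadj : ¬ G.Adj u v)
    {a₁ b₁ a₂ b₂ a₃ b₃ : ℕ}
    (h₁ : HasFracColoring (G.induce s₁) a₁ b₁)
    (h₂ : HasFracColoring (G.induce s₂ ⊔ SimpleGraph.fromEdgeSet {s(⟨u, hu₂⟩, ⟨v, hv₂⟩)}) a₂ b₂)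
    (h₃ : HasFracColoring (contractPair (G.induce s₂) ⟨u, hu₂⟩ ⟨v, hv₂⟩) a₃ b₃) :
    ∃ t ≤ b₁, HasFracColoring G
      (max (b₂ * b₃ * a₁) (b₃ * (b₁ - t) * a₂ + b₂ * t * a₃)) (b₂ * b₃ * b₁) := by
  classical
  have hu₁ : u ∈ s₁ := by
    have h : u ∈ s₁ ∩ s₂ := by rw [hinter]; left; rfl
    exact h.1
  have hv₁ : v ∈ s₁ := by
    have h : v ∈ s₁ ∩ s₂ := by rw [hinter]; right; rfl
    exact h.1
  obtain ⟨f₁, hf₁c, hf₁d⟩ := h₁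
  obtain ⟨f₂, hf₂c, hf₂d⟩ := h₂
  obtain ⟨f₃, hf₃c, hf₃d⟩ := h₃
  set u₁ : ↥s₁ := ⟨u, hu₁⟩
  set v₁ : ↥s₁ := ⟨v, hv₁⟩
  set u₂ : ↥s₂ := ⟨u, hu₂⟩
  set v₂ : ↥s₂ := ⟨v, hv₂⟩
  have huv₂ : u₂ ≠ v₂ := fun h => huv (congrArg Subtype.val h)
  set t := (f₁ u₁ ∩ f₁ v₁).card with htdef
  have ht : t ≤ b₁ := by
    rw [htdef, ← hf₁c u₁]
    exact Finset.card_le_card Finset.inter_subset_left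
  refine ⟨t, ht, ?_⟩
  -- modified third coloring with g₃ u₂ = g₃ v₂
  set g₃ : ↥s₂ → Finset (Fin a₃) := fun x => if x = v₂ then f₃ u₂ else f₃ x with hg₃def
  have hg₃c : ∀ x, (g₃ x).card = b₃ := by
    intro x; rw [hg₃def]; dsimp only; split <;> apply hf₃c
  have hg₃uv : g₃ u₂ = g₃ v₂ := by
    rw [hg₃def]; dsimp only; rw [if_neg huv₂, if_pos rfl]
  have hg₃d : ∀ x y : ↥s₂, (G.induce s₂).Adj x y → Disjoint (g₃ x) (g₃ y) := by
    intro x y hxy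
    set sub : ↥s₂ → ↥s₂ := fun z => if z = v₂ then u₂ else z with hsub
    have hgs : ∀ z, g₃ z = f₃ (sub z) := by
      intro z; rw [hg₃def, hsub]; dsimp only; split <;> rfl
    have hGxy : G.Adj (x : V) (y : V) := hxy
    have hxyne : x ≠ y := hxy.ne
    have hadj : (contractPair (G.induce s₂) u₂ v₂).Adj (sub x) (sub y) := by
      rw [contractPair, SimpleGraph.fromRel_adj]
      constructor
      · rw [hsub]; dsimp only
        by_cases hx : x = v₂
        · rw [if_pos hx]
          have hy : y ≠ v₂ := fun h => hxyne (hx.trans h.symm)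
          rw [if_neg hy]
          intro h
          subst hx
          rw [← h] at hGxy
          exact hnadj (hGxy.symm)
        · rw [if_neg hx]
          by_cases hy : y = v₂
          · rw [if_pos hy]
            intro h
            subst hy
            rw [h] at hGxy
            exact hnadj hGxy
          · rw [if_neg hy]; exact hxyne
      · left; exact ⟨x, y, hxy, rfl, rfl⟩
    rw [hgs x, hgs y]
    exact hf₃d _ _ hadj
  -- second coloring facts
  have hf₂uv : Disjoint (f₂ u₂) (f₂ v₂) := by
    apply hf₂d
    rw [SimpleGraph.sup_adj]
    right
    rw [SimpleGraph.fromEdgeSet_adj]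
    exact ⟨rfl, huv₂⟩
  have hf₂d' : ∀ x y : ↥s₂, (G.induce s₂).Adj x y → Disjoint (f₂ x) (f₂ y) := by
    intro x y h
    exact hf₂d x y (by rw [SimpleGraph.sup_adj]; left; exact h)
  -- constants
  set m := b₃ * (b₁ - t) with hmdef
  set n := b₂ * t with hndef
  set B := b₂ * b₃ * b₁ with hBdef
  set A := max (b₂ * b₃ * a₁) (m * a₂ + n * a₃) with hAdef
  have hmB : m * b₂ + n * b₃ = B := by
    have : (b₁ - t) + t = b₁ := Nat.sub_add_cancel ht
    calc m * b₂ + n * b₃ = b₂ * b₃ * ((b₁ - t) + t) := by rw [hmdef, hndef]; ring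
    _ = B := by rw [this]
  -- scaled first coloring
  set F₁ : ↥s₁ → Finset (Fin (b₂ * b₃) × Fin a₁) := fun x => Finset.univ ×ˢ f₁ x with hF₁def
  have hF₁c : ∀ x, (F₁ x).card = B := by
    intro x
    rw [hF₁def]
    dsimp only
    rw [Finset.card_product, Finset.card_univ, Fintype.card_fin, hf₁c]
  -- combined second coloring
  set comb : ↥s₂ → Finset ((Fin m × Fin a₂) ⊕ (Fin n × Fin a₃)) := fun x =>
    (Finset.univ ×ˢ f₂ x).disjSum (Finset.univ ×ˢ g₃ x) with hcombdef
  have hcombc : ∀ x, (comb x).card = B := by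
    intro x
    rw [hcombdef]
    dsimp only
    rw [Finset.card_disjSum, Finset.card_product, Finset.card_product, Finset.card_univ,
      Finset.card_univ, Fintype.card_fin, Fintype.card_fin, hf₂c, hg₃c, hmB]
  have hcombd : ∀ x y : ↥s₂, (G.induce s₂).Adj x y → Disjoint (comb x) (comb y) := by
    intro x y h
    exact disjSum_disjoint (prod_disjoint (hf₂d' x y h) _ _) (prod_disjoint (hg₃d x y h) _ _)
  -- embeddings into Fin A
  have hcard₁ : Fintype.card (Fin (b₂ * b₃) × Fin a₁) ≤ Fintype.card (Fin A) := by
    rw [Fintype.card_prod, Fintype.card_fin, Fintype.card_fin, Fintype.card_fin]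
    exact le_max_left _ _
  have hcard₂ : Fintype.card ((Fin m × Fin a₂) ⊕ (Fin n × Fin a₃)) ≤ Fintype.card (Fin A) := by
    rw [Fintype.card_sum, Fintype.card_prod, Fintype.card_prod, Fintype.card_fin,
      Fintype.card_fin, Fintype.card_fin, Fintype.card_fin, Fintype.card_fin]
    exact le_max_right _ _
  obtain ⟨ι₁⟩ := Function.Embedding.nonempty_of_card_le hcard₁
  obtain ⟨ι₂⟩ := Function.Embedding.nonempty_of_card_le hcard₂
  -- the four sets to be matched
  set Pt := (F₁ u₁).image ι₁ with hPt
  set Qt := (F₁ v₁).image ι₁ with hQt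
  set Pt' := (comb u₂).image ι₂ with hPt'
  set Qt' := (comb v₂).image ι₂ with hQt'
  have hcP : Pt'.card = Pt.card := by
    rw [hPt, hPt', Finset.card_image_of_injective _ ι₂.injective,
      Finset.card_image_of_injective _ ι₁.injective, hcombc, hF₁c]
  have hcQ : Qt'.card = Qt.card := by
    rw [hQt, hQt', Finset.card_image_of_injective _ ι₂.injective,
      Finset.card_image_of_injective _ ι₁.injective, hcombc, hF₁c]
  have hcPQ : (Pt' ∩ Qt').card = (Pt ∩ Qt).card := by
    rw [hPt, hPt', hQt, hQt', ← Finset.image_inter _ _ ι₂.injective,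
      ← Finset.image_inter _ _ ι₁.injective,
      Finset.card_image_of_injective _ ι₂.injective,
      Finset.card_image_of_injective _ ι₁.injective]
    have e1 : comb u₂ ∩ comb v₂ = (∅ : Finset (Fin m × Fin a₂)).disjSum (Finset.univ ×ˢ g₃ u₂) := by
      rw [hcombdef]
      dsimp only
      rw [disjSum_inter, prod_inter, prod_inter]
      congr 1
      · rw [Finset.disjoint_iff_inter_eq_empty.mp hf₂uv, Finset.product_empty]
      · rw [← hg₃uv]; simp
    have e2 : F₁ u₁ ∩ F₁ v₁ = Finset.univ ×ˢ (f₁ u₁ ∩ f₁ v₁) := by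
      rw [hF₁def]; dsimp only; rw [prod_inter, Finset.univ_inter]
    rw [e1, e2, Finset.card_disjSum, Finset.card_empty, Finset.card_product,
      Finset.card_product, Finset.card_univ, Finset.card_univ, Fintype.card_fin,
      Fintype.card_fin, hg₃c, ← htdef, hndef]
    ring
  obtain ⟨π, hπP, hπQ⟩ := exists_perm_image Pt Qt Pt' Qt' hcP hcQ hcPQ
  -- membership helper
  have mems₂ : ∀ x : V, x ∉ s₁ → x ∈ s₂ := by
    intro x hx
    have h : x ∈ s₁ ∪ s₂ := by rw [hunion]; trivial
    exact h.resolve_left hx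
  -- final coloring
  set F : V → Finset (Fin A) := fun x =>
    if h : x ∈ s₁ then (F₁ ⟨x, h⟩).image ι₁
    else (comb ⟨x, mems₂ x h⟩).image (π ∘ ι₂) with hFdef
  have hπι₂inj : Function.Injective (π ∘ ι₂) := π.injective.comp ι₂.injective
  have hFs₁ : ∀ (x : V) (hx : x ∈ s₁), F x = (F₁ ⟨x, hx⟩).image ι₁ := by
    intro x hx; rw [hFdef]; dsimp only; rw [dif_pos hx]
  have hFu : F u = (comb u₂).image (π ∘ ι₂) := by
    rw [hFs₁ u hu₁, ← Finset.image_image, ← hPt', ← hPt, hπP]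
  have hFv : F v = (comb v₂).image (π ∘ ι₂) := by
    rw [hFs₁ v hv₁, ← Finset.image_image, ← hQt', ← hQt, hπQ]
  have hFs₂ : ∀ (x : V) (hx : x ∈ s₂), F x = (comb ⟨x, hx⟩).image (π ∘ ι₂) := by
    intro x hx
    by_cases h : x ∈ s₁
    · have hx12 : x ∈ s₁ ∩ s₂ := ⟨h, hx⟩
      rw [hinter] at hx12
      rcases hx12 with rfl | rfl
      · exact hFu
      · exact hFv
    · rw [hFdef]; dsimp only; rw [dif_neg h]
  refine ⟨F, fun x => ?_, fun x y hxy => ?_⟩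
  · by_cases h : x ∈ s₁
    · rw [hFs₁ x h, Finset.card_image_of_injective _ ι₁.injective, hF₁c]
    · rw [hFs₂ x (mems₂ x h), Finset.card_image_of_injective _ hπι₂inj, hcombc]
  · rcases hedges x y hxy with ⟨hx, hy⟩ | ⟨hx, hy⟩
    · rw [hFs₁ x hx, hFs₁ y hy, Finset.disjoint_image ι₁.injective]
      exact prod_disjoint (hf₁d ⟨x, hx⟩ ⟨y, hy⟩ hxy) _ _
    · rw [hFs₂ x hx, hFs₂ y hy, Finset.disjoint_image hπι₂inj]
      exact hcombd ⟨x, hx⟩ ⟨y, hy⟩ hxy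

lemma ratio_bound (a₁ b₁ a₂ b₂ a₃ b₃ T : ℕ) (hT : T ≤ b₁)
    (hb₁ : 0 < b₁) (hb₂ : 0 < b₂) (hb₃ : 0 < b₃) (r : ℝ)
    (ha₁r : (a₁ : ℝ) ≤ r * b₁) (ha₂r : (a₂ : ℝ) ≤ r * b₂) (ha₃r : (a₃ : ℝ) ≤ r * b₃) :
    ((max (b₂ * b₃ * a₁) (b₃ * (b₁ - T) * a₂ + b₂ * T * a₃) : ℕ) : ℝ) /
      ((b₂ * b₃ * b₁ : ℕ) : ℝ) ≤ r := by
  have hBR : (0 : ℝ) < ((b₂ * b₃ * b₁ : ℕ) : ℝ) := by positivity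
  rw [div_le_iff₀ hBR, Nat.cast_max]
  have hTle : (T : ℝ) ≤ (b₁ : ℝ) := by exact_mod_cast hT
  have hTnn : (0 : ℝ) ≤ (T : ℝ) := Nat.cast_nonneg _
  apply max_le
  · push_cast
    nlinarith [mul_le_mul_of_nonneg_left ha₁r (by positivity : (0:ℝ) ≤ (b₂ : ℝ) * b₃)]
  · push_cast [Nat.cast_sub hT]
    have h1 : (b₃ : ℝ) * ((b₁ : ℝ) - T) * a₂ ≤ (b₃ : ℝ) * ((b₁ : ℝ) - T) * (r * b₂) := by
      apply mul_le_mul_of_nonneg_left ha₂r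
      nlinarith
    have h2 : (b₂ : ℝ) * T * a₃ ≤ (b₂ : ℝ) * T * (r * b₃) := by
      apply mul_le_mul_of_nonneg_left ha₃r
      positivity
    nlinarith [h1, h2]

/-- If `{u,v}` is a vertex-cut with `uv ∉ E(G)`, and `G` is the union of the induced
subgraphs `G₁ = G[s₁]` and `G₂ = G[s₂]` with `s₁ ∩ s₂ = {u,v}`, then
`χ_f(G) ≤ max (χ_f(G₁), χ_f(G₂ + uv), χ_f(G₂ / uv))`. -/
theorem fracChrom_le_max_of_two_cut_nonedge {V : Type*} [Fintype V] [DecidableEq V]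
    (G : SimpleGraph V) (u v : V) (huv : u ≠ v)
    (s₁ s₂ : Set V) (hunion : s₁ ∪ s₂ = Set.univ)
    (hinter : s₁ ∩ s₂ = {u, v})
    (hu₂ : u ∈ s₂) (hv₂ : v ∈ s₂)
    (hedges : ∀ x y, G.Adj x y → (x ∈ s₁ ∧ y ∈ s₁) ∨ (x ∈ s₂ ∧ y ∈ s₂))
    (hcut : IsVertexCut G ({u, v} : Set V))
    (hnadj : ¬ G.Adj u v) :
    fracChrom G ≤
      max (fracChrom (G.induce s₁))
        (max (fracChrom (G.induce s₂ ⊔ SimpleGraph.fromEdgeSet {s(⟨u, hu₂⟩, ⟨v, hv₂⟩)}))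
          (fracChrom (contractPair (G.induce s₂) ⟨u, hu₂⟩ ⟨v, hv₂⟩))) := by
  classical
  set χ₁ := fracChrom (G.induce s₁) with hχ₁
  set χ₂ := fracChrom (G.induce s₂ ⊔ SimpleGraph.fromEdgeSet {s(⟨u, hu₂⟩, ⟨v, hv₂⟩)}) with hχ₂
  set χ₃ := fracChrom (contractPair (G.induce s₂) ⟨u, hu₂⟩ ⟨v, hv₂⟩) with hχ₃
  set M := max χ₁ (max χ₂ χ₃) with hM
  refine le_of_forall_pos_le_add ?_
  intro ε hε
  obtain ⟨x₁, hx₁mem, hx₁lt⟩ :=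
    Real.lt_sInf_add_pos (fracSet_nonempty (G.induce s₁)) hε
  obtain ⟨a₁, b₁, ha₁, hb₁, hc₁, rfl⟩ := hx₁mem
  obtain ⟨x₂, hx₂mem, hx₂lt⟩ :=
    Real.lt_sInf_add_pos (fracSet_nonempty
      (G.induce s₂ ⊔ SimpleGraph.fromEdgeSet {s(⟨u, hu₂⟩, ⟨v, hv₂⟩)})) hε
  obtain ⟨a₂, b₂, ha₂, hb₂, hc₂, rfl⟩ := hx₂mem
  obtain ⟨x₃, hx₃mem, hx₃lt⟩ :=
    Real.lt_sInf_add_pos (fracSet_nonempty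
      (contractPair (G.induce s₂) ⟨u, hu₂⟩ ⟨v, hv₂⟩)) hε
  obtain ⟨a₃, b₃, ha₃, hb₃, hc₃, rfl⟩ := hx₃mem
  obtain ⟨T, hT, hcol⟩ := glue_coloring G u v huv s₁ s₂ hunion hinter hu₂ hv₂ hedges hnadj
    hc₁ hc₂ hc₃
  have hApos : 0 < max (b₂ * b₃ * a₁) (b₃ * (b₁ - T) * a₂ + b₂ * T * a₃) :=
    lt_of_lt_of_le (by positivity) (le_max_left _ _)
  have hBpos : 0 < b₂ * b₃ * b₁ := by positivity
  have hle := fracChrom_le G hApos hBpos hcol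
  -- real arithmetic
  set r := max ((a₁ : ℝ) / b₁) (max ((a₂ : ℝ) / b₂) ((a₃ : ℝ) / b₃)) with hr
  have hb₁R : (0 : ℝ) < b₁ := by exact_mod_cast hb₁
  have hb₂R : (0 : ℝ) < b₂ := by exact_mod_cast hb₂
  have hb₃R : (0 : ℝ) < b₃ := by exact_mod_cast hb₃
  have hBR : (0 : ℝ) < (b₂ * b₃ * b₁ : ℕ) := by exact_mod_cast hBpos
  have ha₁r : (a₁ : ℝ) ≤ r * b₁ := by
    have : (a₁ : ℝ) / b₁ ≤ r := le_max_left _ _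
    calc (a₁ : ℝ) = ((a₁ : ℝ) / b₁) * b₁ := by field_simp
    _ ≤ r * b₁ := by apply mul_le_mul_of_nonneg_right this hb₁R.le
  have ha₂r : (a₂ : ℝ) ≤ r * b₂ := by
    have : (a₂ : ℝ) / b₂ ≤ r := le_trans (le_max_left _ _) (le_max_right _ _)
    calc (a₂ : ℝ) = ((a₂ : ℝ) / b₂) * b₂ := by field_simp
    _ ≤ r * b₂ := by apply mul_le_mul_of_nonneg_right this hb₂R.le
  have ha₃r : (a₃ : ℝ) ≤ r * b₃ := by
    have : (a₃ : ℝ) / b₃ ≤ r := le_trans (le_max_right _ _) (le_max_right _ _)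
    calc (a₃ : ℝ) = ((a₃ : ℝ) / b₃) * b₃ := by field_simp
    _ ≤ r * b₃ := by apply mul_le_mul_of_nonneg_right this hb₃R.le
  have hTR : ((b₁ - T : ℕ) : ℝ) = (b₁ : ℝ) - T := by
    rw [Nat.cast_sub hT]
  have hTnn : (0 : ℝ) ≤ (T : ℝ) := Nat.cast_nonneg _
  have hTle : (T : ℝ) ≤ (b₁ : ℝ) := by exact_mod_cast hT
  have hratio : ((max (b₂ * b₃ * a₁) (b₃ * (b₁ - T) * a₂ + b₂ * T * a₃) : ℕ) : ℝ) /
      ((b₂ * b₃ * b₁ : ℕ) : ℝ) ≤ r :=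
    ratio_bound a₁ b₁ a₂ b₂ a₃ b₃ T hT hb₁ hb₂ hb₃ r ha₁r ha₂r ha₃r
  have hrM : r ≤ M + ε := by
    apply max_le
    · exact le_trans hx₁lt.le (add_le_add_left (le_max_left _ _) ε)
    · apply max_le
      · exact le_trans hx₂lt.le
          (add_le_add_left (le_trans (le_max_left _ _) (le_max_right _ _)) ε)
      · exact le_trans hx₃lt.le
          (add_le_add_left (le_trans (le_max_right _ _) (le_max_right _ _)) ε)
  exact le_trans hle (le_trans hratio hrM)
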